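/- Under the hypotheses of Lemma 1 (general position, |I(P)| ≥ 3, every consecutive hull triple nonempty, |H(q) ∩ B(P)| = 1 for all hull edges q q⁺ of I(P)), for every hull vertex p_j of P the set Q_j = B(P \ {p_j}) ∩ I(P) has exactly 2 elements. -/

import Mathlib

/-- Points of the plane. -/
abbrev Pt := ℝ × ℝ

/-- A finite point set is in general position if no three of its points are collinear. -/
def GenPos (P : Finset Pt) : Prop :=
  ∀ p ∈ P, ∀ q ∈ P, ∀ r ∈ P, p ≠ q → q ≠ r → p ≠ r → ¬ Collinear ℝ ({p, q, r} : Set Pt)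

open Classical in
/-- The vertices of the convex hull of `P`. -/
noncomputable def hullB (P : Finset Pt) : Finset Pt :=
  P.filter (fun p => p ∉ convexHull ℝ ((P : Set Pt) \ {p}))

open Classical in
/-- The interior points of `P` (the points that are not hull vertices). -/
noncomputable def intI (P : Finset Pt) : Finset Pt := P \ hullB P

/-- A closed convex polygon with vertices in `P`. -/
def IsPolygonOn (P : Finset Pt) (C : Set Pt) : Prop :=
  ∃ V : Finset Pt, V ⊆ P ∧ 3 ≤ V.card ∧ C = convexHull ℝ (V : Set Pt)

/-- A convex decomposition of a region `R` with respect to `P`: closed convex polygons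
with vertices in `P`, pairwise disjoint interiors, union `R`, and no point of `P`
in the interior of any polygon. -/
def IsConvexDecompOfRegion (P : Finset Pt) (R : Set Pt) (D : Finset (Set Pt)) : Prop :=
  (∀ C ∈ D, IsPolygonOn P C) ∧
  (∀ C ∈ D, ∀ C' ∈ D, C ≠ C' → interior C ∩ interior C' = ∅) ∧
  (⋃ C ∈ D, C) = R ∧
  (∀ C ∈ D, ∀ p ∈ P, (p : Pt) ∉ interior C)

/-- A convex decomposition of the point set `P`. -/
def IsConvexDecomp (P : Finset Pt) (D : Finset (Set Pt)) : Prop :=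
  IsConvexDecompOfRegion P (convexHull ℝ (P : Set Pt)) D

/-- `uMin P` is the minimum number of polygons in a convex decomposition of `P`. -/
noncomputable def uMin (P : Finset Pt) : ℕ :=
  sInf {n | ∃ D : Finset (Set Pt), IsConvexDecomp P D ∧ D.card = n}

/-- `p` and `q` are the endpoints of an edge of the convex hull of `P`. -/
def IsHullEdge (P : Finset Pt) (p q : Pt) : Prop :=
  p ∈ hullB P ∧ q ∈ hullB P ∧ p ≠ q ∧
    segment ℝ p q ⊆ frontier (convexHull ℝ (P : Set Pt))

/-- `H` is the open half-plane with `q` and `q'` on its boundary containing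
no point of `I` (the outer half-plane of the edge `q q'` of `CH(I)`). -/
def IsOuterHalf (I : Finset Pt) (q q' : Pt) (H : Set Pt) : Prop :=
  ∃ f : Pt →ₗ[ℝ] ℝ, f ≠ 0 ∧ f q = f q' ∧ H = {x | f q < f x} ∧ ∀ r ∈ I, f r ≤ f q

/-- The angular domain at `a` bounded by the rays from `a` through `b` and through `c`,
containing the segment `b c`. -/
def angDom (a b c : Pt) : Set Pt :=
  {x | ∃ s t : ℝ, 0 ≤ s ∧ 0 ≤ t ∧ x = a + s • (b - a) + t • (c - a)}

/-- Every triangle of three consecutive hull vertices of `P` contains a point of `P`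
in its interior. -/
def TripleFilled (P : Finset Pt) : Prop :=
  ∀ a p c : Pt, IsHullEdge P a p → IsHullEdge P p c → a ≠ c →
    (interior (convexHull ℝ ({a, p, c} : Set Pt)) ∩ (P : Set Pt)).Nonempty

/-- Every outer open half-plane of a hull edge of `I(P)` contains exactly one
hull vertex of `P`. -/
def OuterOne (P : Finset Pt) : Prop :=
  ∀ q q' H, IsHullEdge (intI P) q q' → IsOuterHalf (intI P) q q' H →
    ((hullB P : Set Pt) ∩ H).ncard = 1
noncomputable def detf (w : Pt) : Pt →ₗ[ℝ] ℝ where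
  toFun x := x.1 * w.2 - x.2 * w.1
  map_add' x y := by simp [Prod.fst_add, Prod.snd_add]; ring
  map_smul' c x := by simp [Prod.smul_fst, Prod.smul_snd, smul_eq_mul]; ring

lemma collinear_of_det (q u v : Pt) (hu : u ≠ 0) (h : u.1 * v.2 - u.2 * v.1 = 0) :
    Collinear ℝ ({q, q + u, q + v} : Set Pt) := by
  rw [collinear_iff_of_mem (Set.mem_insert q _)]
  refine ⟨u, ?_⟩
  intro p hp
  rcases hp with rfl | hp
  · exact ⟨0, by simp⟩
  rcases hp with rfl | hp
  · exact ⟨1, by simp [vadd_eq_add, add_comm]⟩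
  rcases hp with rfl
  by_cases h1 : u.1 = 0
  · have h2 : u.2 ≠ 0 := fun h2 => hu (Prod.ext h1 h2)
    have hv1 : v.1 = 0 := by
      rw [h1] at h; simp at h
      rcases h with h | h
      · exact absurd h h2
      · exact h
    refine ⟨v.2 / u.2, ?_⟩
    have hv : v = (v.2 / u.2) • u := by
      apply Prod.ext
      · simp [hv1, h1]
      · simp [Prod.smul_snd, smul_eq_mul]; field_simp
    rw [vadd_eq_add, ← hv, add_comm]
  · refine ⟨v.1 / u.1, ?_⟩
    have hv : v = (v.1 / u.1) • u := by
      apply Prod.ext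
      · simp [Prod.smul_fst, smul_eq_mul]; field_simp
      · simp [Prod.smul_snd, smul_eq_mul]
        field_simp
        nlinarith [h]
    rw [vadd_eq_add, ← hv, add_comm]

lemma ker_det (f : Pt →ₗ[ℝ] ℝ) (hf : f ≠ 0) {u v : Pt} (hu : f u = 0) (hv : f v = 0) :
    u.1 * v.2 - u.2 * v.1 = 0 := by
  have hrepr : ∀ x : Pt, f x = f (1, 0) * x.1 + f (0, 1) * x.2 := by
    intro x
    have hx : x = x.1 • ((1 : ℝ), (0 : ℝ)) + x.2 • ((0 : ℝ), (1 : ℝ)) := by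
      apply Prod.ext <;> simp
    rw [hx, map_add, map_smul, map_smul, smul_eq_mul, smul_eq_mul]
    simp [hx.symm]; ring
  have hab : f (1, 0) ≠ 0 ∨ f (0, 1) ≠ 0 := by
    by_contra hc
    push_neg at hc
    exact hf (LinearMap.ext fun x => by rw [hrepr x, hc.1, hc.2]; simp)
  have hu' := hu; have hv' := hv
  rw [hrepr] at hu' hv'
  rcases hab with ha | hb
  · have h0 : f (1, 0) * (u.1 * v.2 - u.2 * v.1) = 0 := by
      linear_combination v.2 * hu' - u.2 * hv'
    exact (mul_eq_zero.mp h0).resolve_left ha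
  · have h0 : f (0, 1) * (u.1 * v.2 - u.2 * v.1) = 0 := by
      linear_combination (-v.1) * hu' + u.1 * hv'
    exact (mul_eq_zero.mp h0).resolve_left hb

lemma mem_convexHull_filter {S : Finset Pt} {f : Pt →ₗ[ℝ] ℝ} {c : ℝ}
    (hS : ∀ s ∈ S, f s ≤ c) {x : Pt} (hx : x ∈ convexHull ℝ (S : Set Pt)) (hfx : f x = c) :
    x ∈ convexHull ℝ ((S.filter (fun s => f s = c)) : Set Pt) := by
  classical
  rw [Finset.convexHull_eq] at hx
  obtain ⟨w, hw0, hw1, hwx⟩ := hx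
  rw [Finset.centerMass_eq_of_sum_1 _ _ hw1] at hwx
  have hfsum : ∑ y ∈ S, w y * f y = c := by
    have h1 : f (∑ y ∈ S, w y • id y) = ∑ y ∈ S, w y * f y := by
      rw [map_sum]; simp [smul_eq_mul]
    rw [hwx, hfx] at h1
    exact h1.symm
  have hzero : ∀ y ∈ S, w y * (c - f y) = 0 := by
    apply (Finset.sum_eq_zero_iff_of_nonneg ?_).mp
    · calc ∑ y ∈ S, w y * (c - f y)
          = (∑ y ∈ S, w y * c) - ∑ y ∈ S, w y * f y := by
            rw [← Finset.sum_sub_distrib]; congr 1; ext y; ring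
        _ = 0 := by rw [← Finset.sum_mul, hw1, hfsum]; ring
    · intro y hy
      exact mul_nonneg (hw0 y hy) (sub_nonneg.mpr (hS y hy))
  have key : ∀ y ∈ S, w y ≠ 0 → f y = c := by
    intro y hy hwy
    rcases mul_eq_zero.mp (hzero y hy) with h | h
    · exact absurd h hwy
    · linarith [sub_eq_zero.mp h]
  have hsum1 : ∑ y ∈ S.filter (fun s => f s = c), w y = 1 := by
    rw [Finset.sum_filter_of_ne key, hw1]
  rw [Finset.convexHull_eq]
  refine ⟨w, fun y hy => hw0 y (Finset.mem_filter.mp hy).1, hsum1, ?_⟩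
  rw [Finset.centerMass_eq_of_sum_1 _ _ hsum1]
  rw [Finset.sum_filter_of_ne (fun y hy hne => key y hy (fun h0 => hne (by simp [h0])))]
  exact hwx

lemma not_mem_conv {S : Finset Pt} {f : Pt →ₗ[ℝ] ℝ} {q q' : Pt} (hne : q ≠ q')
    (hub : ∀ s ∈ S, f s ≤ f q) (hcol : ∀ s ∈ S, f s = f q → s = q') :
    q ∉ convexHull ℝ (S : Set Pt) := by
  classical
  intro h
  have h2 := mem_convexHull_filter hub h rfl
  have hsub : ((S.filter (fun s => f s = f q)) : Set Pt) ⊆ {q'} := by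
    intro s hs
    rw [Finset.mem_coe, Finset.mem_filter] at hs
    exact hcol s hs.1 hs.2
  have h3 := convexHull_mono hsub h2
  rw [convexHull_singleton] at h3
  exact hne h3

open Classical in
lemma mem_hullB {P : Finset Pt} {p : Pt} :
    p ∈ hullB P ↔ p ∈ P ∧ p ∉ convexHull ℝ ((P : Set Pt) \ {p}) := by
  rw [hullB, Finset.mem_filter]

lemma mem_intI {P : Finset Pt} {p : Pt} : p ∈ intI P ↔ p ∈ P ∧ p ∉ hullB P := by
  rw [intI, Finset.mem_sdiff]

lemma genPos_mono {S P : Finset Pt} (hSP : S ⊆ P) (hgp : GenPos P) : GenPos S :=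
  fun p hp q hq r hr h1 h2 h3 => hgp p (hSP hp) q (hSP hq) r (hSP hr) h1 h2 h3

lemma isHullEdge_of_support {S : Finset Pt} (hgp : GenPos S) {q q' : Pt}
    (hq : q ∈ S) (hq' : q' ∈ S) (hne : q ≠ q') {f : Pt →ₗ[ℝ] ℝ} (hf : f ≠ 0)
    (hfq : f q = f q') (hub : ∀ r ∈ S, f r ≤ f q) : IsHullEdge S q q' := by
  classical
  have hcolgen : ∀ x y : Pt, x ∈ S → y ∈ S → x ≠ y → f x = f q → f y = f q →
      ∀ s ∈ S.erase x, f s = f x → s = y := by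
    intro x y hxS hyS hxy hfx hfy s hs hfs
    by_contra hsy
    have hsx : s ≠ x := Finset.ne_of_mem_erase hs
    have hsS : s ∈ S := Finset.mem_of_mem_erase hs
    have h1 : f (y - x) = 0 := by rw [map_sub, hfx, hfy]; ring
    have h2 : f (s - x) = 0 := by rw [map_sub, hfs, hfx]; ring
    have hdet := ker_det f hf h1 h2
    have hcol := collinear_of_det x (y - x) (s - x) (sub_ne_zero.mpr (Ne.symm hxy)) hdet
    rw [add_sub_cancel, add_sub_cancel] at hcol
    exact hgp x hxS y hyS s hsS hxy (fun h => hsy h.symm) (Ne.symm hsx) hcol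
  have hqB : q ∈ hullB S := by
    rw [mem_hullB]
    refine ⟨hq, ?_⟩
    rw [← Finset.coe_erase]
    exact not_mem_conv hne (fun s hs => hub s (Finset.mem_of_mem_erase hs))
      (hcolgen q q' hq hq' hne rfl hfq.symm)
  have hq'B : q' ∈ hullB S := by
    rw [mem_hullB]
    refine ⟨hq', ?_⟩
    rw [← Finset.coe_erase]
    apply not_mem_conv (Ne.symm hne)
      (fun s hs => le_of_le_of_eq (hub s (Finset.mem_of_mem_erase hs)) hfq)
    intro s hs hfs
    exact hcolgen q' q hq' hq (Ne.symm hne) hfq.symm rfl s hs hfs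
  refine ⟨hqB, hq'B, hne, ?_⟩
  have hclosed : IsClosed (convexHull ℝ (S : Set Pt)) :=
    (S : Set Pt).toFinite.isClosed_convexHull (𝕜 := ℝ)
  have hhalf : convexHull ℝ (S : Set Pt) ⊆ {x | f x ≤ f q} :=
    convexHull_min (fun r hr => hub r (Finset.mem_coe.mp hr))
      (convex_halfSpace_le f.isLinear (f q))
  intro x hx
  have hxC : x ∈ convexHull ℝ (S : Set Pt) :=
    (convex_convexHull ℝ _).segment_subset
      (subset_convexHull ℝ _ (Finset.mem_coe.mpr hq))
      (subset_convexHull ℝ _ (Finset.mem_coe.mpr hq')) hx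
  have hfx : f x = f q := by
    obtain ⟨a, b, ha, hb, hab, rfl⟩ := hx
    rw [map_add, map_smul, map_smul, smul_eq_mul, smul_eq_mul, ← hfq]
    linear_combination f q * hab
  rw [hclosed.frontier_eq]
  refine ⟨hxC, ?_⟩
  intro hint
  obtain ⟨w, hw⟩ : ∃ w : Pt, f w ≠ 0 := by
    by_contra hc
    push_neg at hc
    exact hf (LinearMap.ext fun z => by rw [hc z]; simp)
  set w' : Pt := (f w)⁻¹ • w with hw'
  have hfw' : f w' = 1 := by rw [hw', map_smul, smul_eq_mul, inv_mul_cancel₀ hw]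
  have hw'0 : w' ≠ 0 := fun h => by rw [h] at hfw'; simp at hfw'
  have hnw' : (0 : ℝ) < ‖w'‖ := norm_pos_iff.mpr hw'0
  rw [mem_interior_iff_mem_nhds, Metric.mem_nhds_iff] at hint
  obtain ⟨ε, hε, hball⟩ := hint
  set δ : ℝ := ε / (2 * ‖w'‖) with hδ
  have hδpos : 0 < δ := by positivity
  have hy : x + δ • w' ∈ Metric.ball x ε := by
    rw [Metric.mem_ball, dist_eq_norm]
    have : x + δ • w' - x = δ • w' := by abel
    rw [this, norm_smul, Real.norm_eq_abs, abs_of_pos hδpos, hδ]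
    have hnz : ‖w'‖ ≠ 0 := ne_of_gt hnw'
    have h9 : ε / (2 * ‖w'‖) * ‖w'‖ = ε / 2 := by field_simp
    rw [h9]
    linarith
  have hyC := hhalf (hball hy)
  rw [Set.mem_setOf_eq, map_add, map_smul, hfw', smul_eq_mul, mul_one, hfx] at hyC
  linarith

lemma exists_support_data (P : Finset Pt) (hgp : GenPos P) (hi : 3 ≤ (intI P).card)
    {b : Pt} (hb : b ∈ hullB P) :
    ∃ q q', ∃ f : Pt →ₗ[ℝ] ℝ, q ∈ intI P ∧ q' ∈ intI P ∧ q ≠ q' ∧ f ≠ 0 ∧ f q = f q' ∧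
      (∀ r ∈ intI P, f r ≤ f q) ∧ f q < f b := by
  classical
  obtain ⟨hbP, hbnc⟩ := mem_hullB.mp hb
  have hIsub : (intI P : Set Pt) ⊆ (P : Set Pt) \ {b} := by
    intro r hr
    rw [Finset.mem_coe, mem_intI] at hr
    exact ⟨hr.1, fun h => hr.2 (by rw [Set.mem_singleton_iff] at h; exact h ▸ hb)⟩
  have hbI : b ∉ convexHull ℝ (intI P : Set Pt) := fun h => hbnc (convexHull_mono hIsub h)
  obtain ⟨g, u, hgI, hgb⟩ := geometric_hahn_banach_closed_point (convex_convexHull ℝ _)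
    ((intI P : Set Pt).toFinite.isClosed_convexHull (𝕜 := ℝ)) hbI
  have hIne : (intI P).Nonempty := Finset.card_pos.mp (by omega)
  obtain ⟨q, hqI, hqmax⟩ := Finset.exists_max_image (intI P) (fun r => g r) hIne
  have hgq : (g q : ℝ) < g b :=
    lt_trans (hgI q (subset_convexHull ℝ _ (Finset.mem_coe.mpr hqI))) hgb
  set h : Pt →ₗ[ℝ] ℝ := detf (b - q) with hh
  have hqP : q ∈ P := (mem_intI.mp hqI).1
  have hqb : q ≠ b := fun hqb' => (mem_intI.mp hqI).2 (hqb' ▸ hb)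
  have hIP : ∀ r, r ∈ intI P → r ∈ P := fun r hr => (mem_intI.mp hr).1
  have hdet : ∀ r ∈ (intI P).erase q, h (r - q) ≠ 0 := by
    intro r hr h0
    have hrq : r ≠ q := Finset.ne_of_mem_erase hr
    have hrI : r ∈ intI P := Finset.mem_of_mem_erase hr
    have hrb : r ≠ b := fun hrb' => (mem_intI.mp hrI).2 (hrb' ▸ hb)
    have hcol := collinear_of_det q (r - q) (b - q) (sub_ne_zero.mpr hrq) h0
    rw [add_sub_cancel, add_sub_cancel] at hcol
    exact hgp q hqP r (hIP r hrI) b hbP (Ne.symm hrq) hrb hqb hcol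
  set G : Pt → ℝ := fun x => g x with hG
  set tf : Pt → ℝ := fun r => (G q - G r) / h (r - q) with htf
  have hbq0 : h (b - q) = 0 := by
    show (b - q).1 * (b - q).2 - (b - q).2 * (b - q).1 = 0
    ring
  have main : ∀ q' t, q' ∈ (intI P).erase q →
      (∀ r ∈ (intI P).erase q, G r - G q + t * h (r - q) ≤ 0) →
      G q' - G q + t * h (q' - q) = 0 →
      ∃ q q', ∃ f : Pt →ₗ[ℝ] ℝ, q ∈ intI P ∧ q' ∈ intI P ∧ q ≠ q' ∧ f ≠ 0 ∧ f q = f q' ∧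
        (∀ r ∈ intI P, f r ≤ f q) ∧ f q < f b := by
    intro q' t hq'mem hub heq
    set f : Pt →ₗ[ℝ] ℝ := g.toLinearMap + t • h with hf
    have hfval : ∀ x, f x = G x + t * h x := by
      intro x
      simp [hf, hG, smul_eq_mul]
    have hkey : ∀ r, f r - f q = (G r - G q) + t * h (r - q) := by
      intro r
      rw [hfval, hfval, map_sub]; ring
    have hfb : f q < f b := by
      have hk := hkey b
      rw [hbq0] at hk
      have : G q < G b := hgq
      simp only [mul_zero, add_zero] at hk
      linarith
    refine ⟨q, q', f, hqI, Finset.mem_of_mem_erase hq'mem,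
      Ne.symm (Finset.ne_of_mem_erase hq'mem), ?_, ?_, ?_, hfb⟩
    · intro h0
      rw [h0] at hfb
      simp at hfb
    · have hk := hkey q'
      rw [heq] at hk
      linarith
    · intro r hr
      by_cases hrq : r = q
      · rw [hrq]
      · have h1 := hub r (Finset.mem_erase.mpr ⟨hrq, hr⟩)
        have hk := hkey r
        linarith
  by_cases hTp : ((intI P).erase q |>.filter (fun r => 0 < h (r - q))).Nonempty
  · obtain ⟨q', hq'Tp, hmin⟩ := Finset.exists_min_image _ tf hTp
    have hq'mem : q' ∈ (intI P).erase q := (Finset.mem_filter.mp hq'Tp).1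
    have hq'pos : 0 < h (q' - q) := (Finset.mem_filter.mp hq'Tp).2
    set t := tf q' with ht
    have hGq' : G q' ≤ G q := hqmax q' (Finset.mem_of_mem_erase hq'mem)
    have ht0 : 0 ≤ t := div_nonneg (by linarith) (le_of_lt hq'pos)
    refine main q' t hq'mem ?_ ?_
    · intro r hr
      by_cases hrp : 0 < h (r - q)
      · have hrTp : r ∈ ((intI P).erase q).filter (fun r => 0 < h (r - q)) :=
          Finset.mem_filter.mpr ⟨hr, hrp⟩
        have hm := hmin r hrTp
        have h1 : t * h (r - q) ≤ tf r * h (r - q) :=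
          mul_le_mul_of_nonneg_right hm (le_of_lt hrp)
        have h2 : tf r * h (r - q) = G q - G r := div_mul_cancel₀ _ (ne_of_gt hrp)
        linarith
      · have hneg : h (r - q) < 0 := lt_of_le_of_ne (not_lt.mp hrp) (hdet r hr)
        have hGr : G r ≤ G q := hqmax r (Finset.mem_of_mem_erase hr)
        have h1 : t * h (r - q) ≤ 0 := mul_nonpos_of_nonneg_of_nonpos ht0 (le_of_lt hneg)
        linarith
    · have h2 : t * h (q' - q) = G q - G q' := div_mul_cancel₀ _ (ne_of_gt hq'pos)
      linarith
  · have hallneg : ∀ r ∈ (intI P).erase q, h (r - q) < 0 := by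
      intro r hr
      rcases lt_or_ge (h (r - q)) 0 with h0 | h0
      · exact h0
      · exact absurd ⟨r, Finset.mem_filter.mpr ⟨hr,
          lt_of_le_of_ne h0 (Ne.symm (hdet r hr))⟩⟩ hTp
    have hne' : ((intI P).erase q).Nonempty := by
      rw [← Finset.card_pos, Finset.card_erase_of_mem hqI]; omega
    obtain ⟨q', hq'mem, hmax⟩ := Finset.exists_max_image ((intI P).erase q) tf hne'
    set t := tf q' with ht
    refine main q' t hq'mem ?_ ?_
    · intro r hr
      have hneg := hallneg r hr
      have hm := hmax r hr
      have h1 : t * h (r - q) ≤ tf r * h (r - q) :=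
        mul_le_mul_of_nonpos_right hm (le_of_lt hneg)
      have h2 : tf r * h (r - q) = G q - G r := div_mul_cancel₀ _ (ne_of_lt hneg)
      linarith
    · have h2 : t * h (q' - q) = G q - G q' := div_mul_cancel₀ _ (ne_of_lt (hallneg q' hq'mem))
      linarith

/-- Under the hypotheses of Lemma 1 together with `|Q_j| ≤ 2` for all `j`, every
`Q_j = B(P \ {p_j}) ∩ I(P)` has exactly two elements. -/
theorem Qj_card_two (P : Finset Pt) (hgp : GenPos P)
    (hi : 3 ≤ (intI P).card) (htf : TripleFilled P) (ho : OuterOne P)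
    (hle : ∀ pj ∈ hullB P, (hullB (P.erase pj) ∩ intI P).card ≤ 2) :
    ∀ pj ∈ hullB P, (hullB (P.erase pj) ∩ intI P).card = 2 := by
  
  classical
  intro pj hpj
  obtain ⟨q, q', f, hqI, hq'I, hne, hf0, hfq, hub, hfb⟩ := exists_support_data P hgp hi hpj
  have hgpI : GenPos (intI P) := genPos_mono (fun r hr => (mem_intI.mp hr).1) hgp
  have hedge : IsHullEdge (intI P) q q' := isHullEdge_of_support hgpI hqI hq'I hne hf0 hfq hub
  have houter : IsOuterHalf (intI P) q q' {x | f q < f x} := ⟨f, hf0, hfq, rfl, hub⟩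
  have hcard := ho q q' _ hedge houter
  obtain ⟨a, ha⟩ := Set.ncard_eq_one.mp hcard
  have hpjmem : pj ∈ ((hullB P : Set Pt) ∩ {x | f q < f x}) := ⟨Finset.mem_coe.mpr hpj, hfb⟩
  rw [ha, Set.mem_singleton_iff] at hpjmem
  have honly : ∀ s ∈ hullB P, f q < f s → s = pj := by
    intro s hs hfs
    have hsmem : s ∈ ((hullB P : Set Pt) ∩ {x | f q < f x}) := ⟨Finset.mem_coe.mpr hs, hfs⟩
    rw [ha, Set.mem_singleton_iff] at hsmem
    rw [hsmem, ← hpjmem]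
  have key : ∀ x y : Pt, x ∈ intI P → y ∈ intI P → x ≠ y → f x = f q → f y = f q →
      x ∈ hullB (P.erase pj) := by
    intro x y hxI hyI hxy hfx hfy
    rw [mem_hullB]
    have hxP : x ∈ P := (mem_intI.mp hxI).1
    have hyP : y ∈ P := (mem_intI.mp hyI).1
    have hxpj : x ≠ pj := fun h => (mem_intI.mp hxI).2 (h ▸ hpj)
    refine ⟨Finset.mem_erase.mpr ⟨hxpj, hxP⟩, ?_⟩
    rw [← Finset.coe_erase]
    apply not_mem_conv hxy
    · intro s hs
      have hsx : s ≠ x := Finset.ne_of_mem_erase hs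
      have hs2 : s ∈ P.erase pj := Finset.mem_of_mem_erase hs
      have hspj : s ≠ pj := Finset.ne_of_mem_erase hs2
      have hsP : s ∈ P := Finset.mem_of_mem_erase hs2
      rw [hfx]
      by_cases hsB : s ∈ hullB P
      · by_contra hlt
        push_neg at hlt
        exact hspj (honly s hsB hlt)
      · exact hub s (mem_intI.mpr ⟨hsP, hsB⟩)
    · intro s hs hfs
      by_contra hsy
      have hsx : s ≠ x := Finset.ne_of_mem_erase hs
      have hsP : s ∈ P := Finset.mem_of_mem_erase (Finset.mem_of_mem_erase hs)
      have h1 : f (y - x) = 0 := by rw [map_sub, hfx, hfy]; ring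
      have h2 : f (s - x) = 0 := by rw [map_sub, hfs, hfx]; ring
      have hdet := ker_det f hf0 h1 h2
      have hcol := collinear_of_det x (y - x) (s - x) (sub_ne_zero.mpr (Ne.symm hxy)) hdet
      rw [add_sub_cancel, add_sub_cancel] at hcol
      exact hgp x hxP y hyP s hsP hxy (fun h => hsy h.symm) (Ne.symm hsx) hcol
  have hq2 : q ∈ hullB (P.erase pj) := key q q' hqI hq'I hne rfl hfq.symm
  have hq'2 : q' ∈ hullB (P.erase pj) := key q' q hq'I hqI (Ne.symm hne) hfq.symm rfl
  have hlt : 1 < (hullB (P.erase pj) ∩ intI P).card :=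
    Finset.one_lt_card.mpr ⟨q, Finset.mem_inter.mpr ⟨hq2, hqI⟩,
      q', Finset.mem_inter.mpr ⟨hq'2, hq'I⟩, hne⟩
  have hle2 := hle pj hpj
  omega
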